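/- arXiv:cond-mat/0502356 — 2 statements merged into one kernel-verified Lean document; each statement's English description precedes it below -/
import Mathlib

section
/- Among all hyperbolic 2-orbifold signatures (g; ν₁,…,νₙ) with g, n ≥ 0 and integers νⱼ ≥ 2, subject to χ_orb = 2 − 2g + Σⱼ(1/νⱼ) − n < 0, the maximum value of χ_orb (i.e. the negative value closest to zero) is −1/42, attained by the signature (0; 2, 3, 7). -/
/-- The orbifold Euler characteristic of a 2-orbifold of signature `(g; ν₁,…,νₙ)`. -/
noncomputable def chiOrb (g n : ℕ) (ν : Fin n → ℕ) : ℚ :=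
  2 - 2 * g + ∑ j, 1 / (ν j : ℚ) - n


lemma invNatLe {k x : ℕ} (hk : 0 < k) (h : k ≤ x) : (1:ℚ)/x ≤ 1/k := by
  apply one_div_le_one_div_of_le
  · exact_mod_cast hk
  · exact_mod_cast h

lemma triple_sorted {a b c : ℕ} (ha : 2 ≤ a) (hab : a ≤ b) (hbc : b ≤ c)
    (hlt : 1/(a:ℚ) + 1/b + 1/c < 1) :
    1/(a:ℚ) + 1/b + 1/c ≤ 41/42 ∧
      (1/(a:ℚ) + 1/b + 1/c = 41/42 → a = 2 ∧ b = 3 ∧ c = 7) := by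
  have hb2 : 2 ≤ b := ha.trans hab
  have hc2 : 2 ≤ c := hb2.trans hbc
  by_cases ha4 : 4 ≤ a
  · have h1 := invNatLe (k := 4) (x := a) (by norm_num) ha4
    have h2 := invNatLe (k := 4) (x := b) (by norm_num) (ha4.trans hab)
    have h3 := invNatLe (k := 4) (x := c) (by norm_num) ((ha4.trans hab).trans hbc)
    push_cast at h1 h2 h3
    exact ⟨by linarith, fun h => by linarith⟩
  · have ha3 : a ≤ 3 := by omega
    interval_cases a <;> push_cast at hlt ⊢
    · -- a = 2
      by_cases hb5 : 5 ≤ b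
      · have h2 := invNatLe (k := 5) (x := b) (by norm_num) hb5
        have h3 := invNatLe (k := 5) (x := c) (by norm_num) (hb5.trans hbc)
        push_cast at h2 h3
        exact ⟨by linarith, fun h => by linarith⟩
      · have hb4 : b ≤ 4 := by omega
        interval_cases b <;> push_cast at hlt ⊢
        · -- b = 2 : impossible
          exfalso
          have h3 : (0:ℚ) < 1/c := by positivity
          linarith
        · -- b = 3 : main case, c ≥ 7
          have hc7 : 7 ≤ c := by
            by_contra h
            push_neg at h
            have h6 := invNatLe (k := c) (x := 6) (by omega) (by omega)
            push_cast at h6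
            linarith
          have h3 := invNatLe (k := 7) (x := c) (by norm_num) hc7
          push_cast at h3
          constructor
          · linarith
          · intro h
            have hcq : (1:ℚ)/c = 1/7 := by linarith
            have hcpos : (0:ℚ) < c := by positivity
            have hceq : (c:ℚ) = 7 := by field_simp at hcq; linarith
            have : c = 7 := by exact_mod_cast hceq
            exact ⟨trivial, trivial, this⟩
        · -- b = 4 : c ≥ 5
          have hc5 : 5 ≤ c := by
            by_contra h
            push_neg at h
            have h4 := invNatLe (k := c) (x := 4) (by omega) (by omega)
            push_cast at h4
            linarith
          have h3 := invNatLe (k := 5) (x := c) (by norm_num) hc5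
          push_cast at h3
          exact ⟨by linarith, fun h => by linarith⟩
    · -- a = 3
      by_cases hb4 : 4 ≤ b
      · have h2 := invNatLe (k := 4) (x := b) (by norm_num) hb4
        have h3 := invNatLe (k := 4) (x := c) (by norm_num) (hb4.trans hbc)
        push_cast at h2 h3
        exact ⟨by linarith, fun h => by linarith⟩
      · have hb3 : b = 3 := by omega
        subst hb3
        push_cast at hlt ⊢
        have hc4 : 4 ≤ c := by
          by_contra h
          push_neg at h
          have h4 := invNatLe (k := c) (x := 3) (by omega) (by omega)
          push_cast at h4
          linarith
        have h3 := invNatLe (k := 4) (x := c) (by norm_num) hc4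
        push_cast at h3
        exact ⟨by linarith, fun h => by linarith⟩

lemma triple {a b c : ℕ} (ha : 2 ≤ a) (hb : 2 ≤ b) (hc : 2 ≤ c)
    (hlt : 1/(a:ℚ) + 1/b + 1/c < 1) :
    1/(a:ℚ) + 1/b + 1/c ≤ 41/42 ∧
      (1/(a:ℚ) + 1/b + 1/c = 41/42 → ({a, b, c} : Multiset ℕ) = {2, 3, 7}) := by
  rcases le_total a b with h1 | h1 <;> rcases le_total b c with h2 | h2 <;>
    rcases le_total a c with h3 | h3
  · obtain ⟨H1, H2⟩ := triple_sorted (a := a) (b := b) (c := c) ha h1 h2 (by linarith)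
    exact ⟨by linarith, fun h => by obtain ⟨e1, e2, e3⟩ := H2 (by linarith); subst e1; subst e2; subst e3; decide⟩
  · obtain ⟨H1, H2⟩ := triple_sorted (a := a) (b := b) (c := c) ha h1 h2 (by linarith)
    exact ⟨by linarith, fun h => by obtain ⟨e1, e2, e3⟩ := H2 (by linarith); subst e1; subst e2; subst e3; decide⟩
  · obtain ⟨H1, H2⟩ := triple_sorted (a := a) (b := c) (c := b) ha h3 h2 (by linarith)
    exact ⟨by linarith, fun h => by obtain ⟨e1, e2, e3⟩ := H2 (by linarith); subst e1; subst e2; subst e3; decide⟩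
  · obtain ⟨H1, H2⟩ := triple_sorted (a := c) (b := a) (c := b) hc h3 h1 (by linarith)
    exact ⟨by linarith, fun h => by obtain ⟨e1, e2, e3⟩ := H2 (by linarith); subst e1; subst e2; subst e3; decide⟩
  · obtain ⟨H1, H2⟩ := triple_sorted (a := b) (b := a) (c := c) hb h1 h3 (by linarith)
    exact ⟨by linarith, fun h => by obtain ⟨e1, e2, e3⟩ := H2 (by linarith); subst e1; subst e2; subst e3; decide⟩
  · obtain ⟨H1, H2⟩ := triple_sorted (a := b) (b := c) (c := a) hb h2 h3 (by linarith)
    exact ⟨by linarith, fun h => by obtain ⟨e1, e2, e3⟩ := H2 (by linarith); subst e1; subst e2; subst e3; decide⟩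
  · obtain ⟨H1, H2⟩ := triple_sorted (a := c) (b := b) (c := a) hc h2 h1 (by linarith)
    exact ⟨by linarith, fun h => by obtain ⟨e1, e2, e3⟩ := H2 (by linarith); subst e1; subst e2; subst e3; decide⟩
  · obtain ⟨H1, H2⟩ := triple_sorted (a := c) (b := b) (c := a) hc h2 h1 (by linarith)
    exact ⟨by linarith, fun h => by obtain ⟨e1, e2, e3⟩ := H2 (by linarith); subst e1; subst e2; subst e3; decide⟩

lemma easy_case {q : ℚ} (P : Prop) (h : q ≤ -(1/6)) :
    q ≤ -(1/42) ∧ (q = -(1/42) → P) :=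
  ⟨by linarith, fun he => by rw [he] at h; norm_num at h⟩

lemma sum_half {n : ℕ} (ν : Fin n → ℕ) (h2 : ∀ j, 2 ≤ ν j) :
    ∑ j, 1 / (ν j : ℚ) ≤ n / 2 := by
  calc ∑ j, 1 / (ν j : ℚ) ≤ ∑ _j : Fin n, (1/2 : ℚ) :=
        Finset.sum_le_sum (fun j _ => invNatLe (by norm_num) (h2 j))
    _ = n / 2 := by simp [Finset.sum_const]; ring

lemma sum_nn {n : ℕ} (ν : Fin n → ℕ) : (0:ℚ) ≤ ∑ j, 1 / (ν j : ℚ) :=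
  Finset.sum_nonneg fun j _ => by positivity

lemma master (g n : ℕ) (ν : Fin n → ℕ) (h2 : ∀ j, 2 ≤ ν j)
    (hneg : chiOrb g n ν < 0) :
    chiOrb g n ν ≤ -(1/42) ∧ (chiOrb g n ν = -(1/42) →
      g = 0 ∧ n = 3 ∧ (List.ofFn ν : Multiset ℕ) = {2, 3, 7}) := by
  have hs := sum_half ν h2
  have hs0 := sum_nn ν
  unfold chiOrb at hneg ⊢
  match g, n with
  | g + 2, n =>
    apply easy_case
    have hn : (0:ℚ) ≤ n := by positivity
    push_cast
    linarith
  | 1, 0 =>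
    exfalso
    simp only [Finset.univ_eq_empty, Finset.sum_empty] at hneg
    norm_num at hneg
  | 1, n + 1 =>
    apply easy_case
    have hn : (0:ℚ) ≤ (n:ℚ) := Nat.cast_nonneg n
    push_cast
    push_cast at hs
    linarith
  | 0, 0 =>
    exfalso
    simp only [Finset.univ_eq_empty, Finset.sum_empty] at hneg
    norm_num at hneg
  | 0, 1 =>
    exfalso
    push_cast at hneg
    linarith
  | 0, 2 =>
    exfalso
    push_cast at hneg
    linarith
  | 0, 3 =>
    rw [Fin.sum_univ_three] at hneg hs hs0 ⊢
    have hlt : 1/(ν 0 : ℚ) + 1/(ν 1) + 1/(ν 2) < 1 := by push_cast at hneg; linarith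
    obtain ⟨H1, H2⟩ := triple (h2 0) (h2 1) (h2 2) hlt
    constructor
    · push_cast; linarith
    · intro h
      refine ⟨rfl, rfl, ?_⟩
      have hsum : 1/(ν 0 : ℚ) + 1/(ν 1) + 1/(ν 2) = 41/42 := by push_cast at h; linarith
      have := H2 hsum
      rw [← this]; rfl
  | 0, 4 =>
    apply easy_case
    by_cases hall : ∀ j, ν j = 2
    · exfalso
      have : ∑ j, 1 / (ν j : ℚ) = 2 := by
        simp [hall]
        norm_num
      rw [this] at hneg
      push_cast at hneg
      linarith
    · push_neg at hall
      obtain ⟨j0, hj0⟩ := hall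
      have hj3 : 3 ≤ ν j0 := by have := h2 j0; omega
      have key : ∑ j, 1 / (ν j : ℚ) ≤ 1/3 + 3/2 := by
        have e1 : 1/(ν j0 : ℚ) + ∑ j ∈ Finset.univ.erase j0, 1/(ν j : ℚ)
            = ∑ j, 1/(ν j : ℚ) := Finset.add_sum_erase _ (fun j => 1/(ν j : ℚ)) (Finset.mem_univ j0)
        have e2 : ∑ j ∈ Finset.univ.erase j0, 1/(ν j : ℚ)
            ≤ (Finset.univ.erase j0).card • (1/2 : ℚ) :=
          Finset.sum_le_card_nsmul _ _ _ (fun j _ => invNatLe (by norm_num) (h2 j))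
        have e3 : (Finset.univ.erase j0).card = 3 := by
          rw [Finset.card_erase_of_mem (Finset.mem_univ j0)]
          simp
        rw [e3] at e2
        have e4 : 1/(ν j0 : ℚ) ≤ 1/3 := invNatLe (by norm_num) hj3
        have e5 : (3 : ℕ) • (1/2 : ℚ) = 3/2 := by norm_num
        rw [e5] at e2
        linarith
      push_cast
      linarith
  | 0, n + 5 =>
    apply easy_case
    have hn : (0:ℚ) ≤ n := by positivity
    push_cast
    push_cast at hs
    linarith

/-- Among hyperbolic signatures (`χ_orb < 0`) the maximum of `χ_orb` is `-1/42`,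
attained precisely by the signature `(0; 2, 3, 7)`. -/
theorem hurwitz_orbifold_minimum :
    (∀ (g n : ℕ) (ν : Fin n → ℕ), (∀ j, 2 ≤ ν j) → chiOrb g n ν < 0 →
      chiOrb g n ν ≤ -(1 / 42)) ∧
    chiOrb 0 3 ![2, 3, 7] = -(1 / 42) ∧
    (∀ (g n : ℕ) (ν : Fin n → ℕ), (∀ j, 2 ≤ ν j) → chiOrb g n ν = -(1 / 42) →
      g = 0 ∧ n = 3 ∧ (List.ofFn ν : Multiset ℕ) = {2, 3, 7}) := by
  refine ⟨fun g n ν h2 hneg => (master g n ν h2 hneg).1, ?_,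
    fun g n ν h2 heq => (master g n ν h2 (by rw [heq]; norm_num)).2 heq⟩
  simp [chiOrb, Fin.sum_univ_three]
  norm_num
end

section
/- (Hurwitz bound as a corollary of the orbifold minimum) If a finite group G acts effectively by orientation-preserving isometries on a closed hyperbolic surface of genus g' ≥ 2 with quotient orbifold of signature (g; ν₁,…,νₙ), then #G = (2g'−2)/(−χ_orb) ≤ 84(g'−1), using that −χ_orb ≥ 1/42 for hyperbolic signatures. -/
lemma inv_nat_le (k x : ℕ) (hk : 0 < k) (h : k ≤ x) : (1:ℚ)/x ≤ 1/k := by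
  have hx : (0:ℚ) < k := by exact_mod_cast hk
  apply one_div_le_one_div_of_le hx
  exact_mod_cast h

lemma inv_nat_lt (k x : ℕ) (hx : 0 < x) (h : (1:ℚ)/x < 1/k) : k < x := by
  by_contra hc
  push_neg at hc
  have := inv_nat_le x k hx hc
  linarith

lemma triangle_sorted (a b c : ℕ) (ha : 2 ≤ a) (hb : 2 ≤ b) (hc : 2 ≤ c)
    (hab : a ≤ b) (hbc : b ≤ c)
    (h : (1:ℚ)/a + 1/b + 1/c < 1) : (1:ℚ)/a + 1/b + 1/c ≤ 41/42 := by
  have ha0 : 0 < a := by omega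
  have hb0 : 0 < b := by omega
  have hc0 : 0 < c := by omega
  rcases le_or_gt 4 a with h4 | h4
  · have h1 := inv_nat_le 4 a (by norm_num) h4
    have h2 := inv_nat_le 4 b (by norm_num) (le_trans h4 hab)
    have h3 := inv_nat_le 4 c (by norm_num) (le_trans h4 (le_trans hab hbc))
    norm_num at h1 h2 h3 ⊢; linarith
  · interval_cases a
    · -- a = 2
      rcases le_or_gt 5 b with h5 | h5
      · have h2 := inv_nat_le 5 b (by norm_num) h5
        have h3 := inv_nat_le 5 c (by norm_num) (le_trans h5 hbc)
        norm_num at h2 h3 ⊢; linarith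
      · interval_cases b
        · -- b = 2 : 1/c < 0 impossible
          exfalso
          have h3 : (0:ℚ) < 1/c := by positivity
          norm_num at h; linarith
        · -- b = 3 : need c ≥ 7
          have hcc : 6 < c := by
            apply inv_nat_lt 6 c hc0
            norm_num at h ⊢; linarith
          have h3 := inv_nat_le 7 c (by norm_num) (by omega)
          norm_num at h3 ⊢; linarith
        · -- b = 4 : need c ≥ 5
          have hcc : 4 < c := by
            apply inv_nat_lt 4 c hc0
            norm_num at h ⊢; linarith
          have h3 := inv_nat_le 5 c (by norm_num) (by omega)
          norm_num at h3 ⊢; linarith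
    · -- a = 3
      rcases le_or_gt 4 b with h5 | h5
      · have h2 := inv_nat_le 4 b (by norm_num) h5
        have h3 := inv_nat_le 4 c (by norm_num) (le_trans h5 hbc)
        norm_num at h2 h3 ⊢; linarith
      · interval_cases b
        · -- b = 3 : need c ≥ 4
          have hcc : 3 < c := by
            apply inv_nat_lt 3 c hc0
            norm_num at h ⊢; linarith
          have h3 := inv_nat_le 4 c (by norm_num) (by omega)
          norm_num at h3 ⊢; linarith

lemma triangle (a b c : ℕ) (ha : 2 ≤ a) (hb : 2 ≤ b) (hc : 2 ≤ c)
    (h : (1:ℚ)/a + 1/b + 1/c < 1) : (1:ℚ)/a + 1/b + 1/c ≤ 41/42 := by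
  rcases le_total a b with hab | hab <;> rcases le_total b c with hbc | hbc <;>
    rcases le_total a c with hac | hac
  · linarith [triangle_sorted a b c ha hb hc hab hbc (by linarith)]
  · linarith [triangle_sorted a b c ha hb hc hab hbc (by linarith)]
  · linarith [triangle_sorted a c b ha hc hb hac hbc (by linarith)]
  · linarith [triangle_sorted c a b hc ha hb hac hab (by linarith)]
  · linarith [triangle_sorted b a c hb ha hc hab hac (by linarith)]
  · linarith [triangle_sorted b c a hb hc ha hbc hac (by linarith)]
  · linarith [triangle_sorted c b a hc hb ha hbc hab (by linarith)]
  · linarith [triangle_sorted c b a hc hb ha hbc hab (by linarith)]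

lemma chi_min (g n : ℕ) (ν : Fin n → ℕ) (hν : ∀ j, 2 ≤ ν j)
    (hχ : chiOrb g n ν < 0) : (1:ℚ)/42 ≤ -(chiOrb g n ν) := by
  have hterm : ∀ j : Fin n, (1:ℚ)/(ν j) ≤ 1/2 := fun j =>
    inv_nat_le 2 (ν j) (by norm_num) (hν j)
  have htpos : ∀ j : Fin n, (0:ℚ) < 1/(ν j) := fun j => by
    have : 0 < ν j := by have := hν j; omega
    positivity
  have hT_le : (∑ j, 1/(ν j : ℚ)) ≤ n/2 := by
    calc (∑ j, 1/(ν j : ℚ)) ≤ ∑ _j : Fin n, (1/2 : ℚ) :=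
          Finset.sum_le_sum (fun j _ => hterm j)
      _ = n/2 := by simp [Finset.card_univ]; ring
  have hT_nonneg : (0:ℚ) ≤ ∑ j, 1/(ν j : ℚ) :=
    Finset.sum_nonneg (fun j _ => (htpos j).le)
  unfold chiOrb at hχ ⊢
  rcases le_or_gt 2 g with hg | hg
  · have : (2:ℚ) ≤ g := by exact_mod_cast hg
    linarith
  · interval_cases g
    · -- g = 0
      push_cast at hχ ⊢
      rcases le_or_gt 5 n with hn | hn
      · have : (5:ℚ) ≤ n := by exact_mod_cast hn
        linarith
      · have hn3 : 3 ≤ n := by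
          by_contra hc
          push_neg at hc
          have : (n:ℚ) ≤ 2 := by exact_mod_cast Nat.lt_succ_iff.mp hc
          linarith
        interval_cases n
        · -- n = 3
          rw [Fin.sum_univ_three] at hχ ⊢
          have := triangle (ν 0) (ν 1) (ν 2) (hν 0) (hν 1) (hν 2) (by norm_num at hχ ⊢; linarith)
          norm_num at this ⊢; linarith
        · -- n = 4
          rw [Fin.sum_univ_four] at hχ ⊢
          by_cases hall : ∀ i : Fin 4, ν i = 2
          · exfalso
            rw [hall 0, hall 1, hall 2, hall 3] at hχ
            norm_num at hχ
          · push_neg at hall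
            obtain ⟨i, hi⟩ := hall
            have hi3 : 3 ≤ ν i := by have := hν i; omega
            have hii := inv_nat_le 3 (ν i) (by norm_num) hi3
            fin_cases i <;> simp at hii <;>
              [ (have h1 := hterm 1; have h2 := hterm 2; have h3 := hterm 3);
                (have h1 := hterm 0; have h2 := hterm 2; have h3 := hterm 3);
                (have h1 := hterm 0; have h2 := hterm 1; have h3 := hterm 3);
                (have h1 := hterm 0; have h2 := hterm 1; have h3 := hterm 2) ] <;>
              (norm_num at * ; linarith)
    · -- g = 1
      push_cast at hχ ⊢
      rcases Nat.eq_zero_or_pos n with hn | hn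
      · subst hn; simp at hχ
      · have : (1:ℚ) ≤ n := by exact_mod_cast hn
        linarith

/-- Hurwitz bound: if a finite group of order `G` acts on a closed hyperbolic
surface of genus `g' ≥ 2` with quotient orbifold of signature `(g;ν₁,…,νₙ)`,
then `#G = (2g'-2)/(-χ_orb) ≤ 84(g'-1)`. -/
theorem hurwitz_eighty_four_bound (G g g' n : ℕ) (ν : Fin n → ℕ)
    (hν : ∀ j, 2 ≤ ν j) (hg' : 2 ≤ g') (hG : 0 < G)
    (hχ : chiOrb g n ν < 0)
    (hmult : (2 * g' - 2 : ℚ) = (G : ℚ) * (-(chiOrb g n ν))) :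
    (G : ℚ) = (2 * g' - 2) / (-(chiOrb g n ν)) ∧ G ≤ 84 * (g' - 1) := by
  have hpos : (0:ℚ) < -(chiOrb g n ν) := by linarith
  have hmin := chi_min g n ν hν hχ
  constructor
  · rw [eq_div_iff (ne_of_gt hpos)]
    linarith [hmult]
  · have hGQ : (G:ℚ) * (1/42) ≤ (G:ℚ) * (-(chiOrb g n ν)) := by
      apply mul_le_mul_of_nonneg_left hmin (by positivity)
    have hG' : (G:ℚ) ≤ 84 * (g':ℚ) - 84 := by
      rw [← hmult] at hGQ
      linarith
    have : (G:ℚ) ≤ ((84 * (g' - 1) : ℕ) : ℚ) := by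
      push_cast [Nat.cast_sub (by omega : 1 ≤ g')]
      linarith
    exact_mod_cast this
end
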